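/- Let N > 2s with s ∈ (0,1), and let g : ℝ → ℝ satisfy (g1), (g2) with constant m > 0, and (g3). Define, for t ≥ 0, g₁(t) = max(g(t)+mt, 0) and g₂(t) = g₁(t) − g(t), extended oddly to t < 0, and set G_i(t) = ∫₀ᵗ g_i(τ) dτ for i = 1,2. Then for every ε > 0 there exists C_ε > 0 such that G₁(t) ≤ C_ε |t|^{2*_s} + ε G₂(t) for all t ∈ ℝ. -/
import Mathlib
open MeasureTheory Filter Topology ENNReal

noncomputable def gOne (g : ℝ → ℝ) (m : ℝ) (t : ℝ) : ℝ :=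
  if 0 ≤ t then max (g t + m * t) 0 else -(max (g (-t) + m * (-t)) 0)

noncomputable def gTwo (g : ℝ → ℝ) (m : ℝ) (t : ℝ) : ℝ := gOne g m t - g t

section aux
variable {g : ℝ → ℝ} {m : ℝ}

lemma g_zero (hodd : ∀ t, g (-t) = -g t) : g 0 = 0 := by
  have := hodd 0; simp at this; linarith

lemma gOne_of_nonneg {t : ℝ} (ht : 0 ≤ t) : gOne g m t = max (g t + m * t) 0 := if_pos ht

lemma gOne_odd (hodd : ∀ t, g (-t) = -g t) (t : ℝ) : gOne g m (-t) = -gOne g m t := by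
  rcases lt_trichotomy t 0 with h | h | h
  · rw [gOne, if_pos (by linarith), gOne, if_neg (not_le.2 h), neg_neg]
  · subst h; simp [gOne, g_zero hodd]
  · rw [gOne, if_neg (by simp; linarith), neg_neg, gOne, if_pos h.le]

lemma gTwo_odd (hodd : ∀ t, g (-t) = -g t) (t : ℝ) : gTwo g m (-t) = -gTwo g m t := by
  simp [gTwo, gOne_odd hodd, hodd t]; ring

lemma gOne_cont (hg : Continuous g) (hodd : ∀ t, g (-t) = -g t) :
    Continuous (gOne g m) := by
  have : Continuous fun t : ℝ => if (0:ℝ) ≤ t then max (g t + m * t) 0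
      else -(max (g (-t) + m * (-t)) 0) := by
    apply Continuous.if_le
    · exact (hg.add (continuous_const.mul continuous_id)).max continuous_const
    · exact (((hg.comp continuous_neg).add
        (continuous_const.mul continuous_neg)).max continuous_const).neg
    · exact continuous_const
    · exact continuous_id
    · intro x hx
      rw [← hx]
      simp [g_zero hodd]
  exact this

lemma int_odd_neg (f : ℝ → ℝ) (hf : ∀ t, f (-t) = -f t) (t : ℝ) :
    ∫ τ in (0:ℝ)..(-t), f τ = ∫ τ in (0:ℝ)..t, f τ := by
  have h := intervalIntegral.integral_comp_neg (a := (0:ℝ)) (b := t) f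
  simp only [hf, intervalIntegral.integral_neg, neg_zero] at h
  rw [show ∫ x in -t..(0:ℝ), f x = -∫ x in (0:ℝ)..(-t), f x from
    (intervalIntegral.integral_symm _ _)] at h
  linarith

lemma gOne_nonneg {t : ℝ} (ht : 0 ≤ t) : 0 ≤ gOne g m t := by
  rw [gOne_of_nonneg ht]; exact le_max_right _ _

lemma gTwo_ge {t : ℝ} (ht : 0 ≤ t) : m * t ≤ gTwo g m t := by
  rw [gTwo, gOne_of_nonneg ht]
  have := le_max_left (g t + m * t) 0
  linarith

end aux

set_option maxHeartbeats 1000000 in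
theorem bigGOne_le_of_bigGTwo
    (N : ℕ) (s : ℝ) (hs : s ∈ Set.Ioo (0:ℝ) 1) (hNs : 2 * s < N)
    (g : ℝ → ℝ) (m : ℝ)
-- (g1)
    (hg1 : ContDiff ℝ 1 g) (hodd : ∀ t, g (-t) = -g t)
    -- (g2)
    (hm : 0 < m)
    (hg2a : ⊥ < Filter.liminf (fun t : ℝ => ((g t / t : ℝ) : EReal)) (𝓝[>] (0:ℝ)))
    (hg2b : Filter.liminf (fun t : ℝ => ((g t / t : ℝ) : EReal)) (𝓝[>] (0:ℝ)) ≤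
        Filter.limsup (fun t : ℝ => ((g t / t : ℝ) : EReal)) (𝓝[>] (0:ℝ)))
    (hg2c : Filter.limsup (fun t : ℝ => ((g t / t : ℝ) : EReal)) (𝓝[>] (0:ℝ))
        = ((-m : ℝ) : EReal))
-- (g3)
    (hg3top : Tendsto (fun t : ℝ => |g t| / |t| ^ (2 * (N:ℝ) / ((N:ℝ) - 2*s) - 1))
        atTop (𝓝 0))
    (hg3bot : Tendsto (fun t : ℝ => |g t| / |t| ^ (2 * (N:ℝ) / ((N:ℝ) - 2*s) - 1))
        atBot (𝓝 0)) :
    ∀ ε : ℝ, 0 < ε → ∃ C : ℝ, 0 < C ∧ ∀ t : ℝ,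
      (∫ τ in (0:ℝ)..t, gOne g m τ) ≤
        C * |t| ^ (2 * (N:ℝ) / ((N:ℝ) - 2*s)) + ε * ∫ τ in (0:ℝ)..t, gTwo g m τ := by
  intro ε hε
  set p : ℝ := 2 * (N:ℝ) / ((N:ℝ) - 2*s) with hpdef
  have hNs' : (0:ℝ) < (N:ℝ) - 2*s := by linarith
  have hp2 : 2 < p := by
    rw [hpdef, lt_div_iff₀ hNs']
    nlinarith [hs.1]
  have hgc : Continuous g := hg1.continuous
  have hc1 : Continuous (gOne g m) := gOne_cont hgc hodd
  have hc2 : Continuous (gTwo g m) := hc1.sub hgc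
  -- behavior near zero
  have hev : ∀ᶠ t in 𝓝[>] (0:ℝ), ((g t / t : ℝ) : EReal) < (((-m + ε*m : ℝ)) : EReal) := by
    refine Filter.eventually_lt_of_limsup_lt ?_ (by isBoundedDefault)
    rw [hg2c]
    exact_mod_cast (by nlinarith : (-m:ℝ) < -m + ε*m)
  obtain ⟨u, hu, hsub⟩ := mem_nhdsGT_iff_exists_Ioo_subset.1 hev
  have hu0 : (0:ℝ) < u := hu
  set t₀ : ℝ := u/2 with ht₀def
  have ht₀ : 0 < t₀ := by positivity
  have hsmall : ∀ τ ∈ Set.Icc (0:ℝ) t₀, gOne g m τ ≤ ε*m*τ := by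
    rintro τ ⟨h0, h1⟩
    rcases eq_or_lt_of_le h0 with h | h
    · simp [← h, gOne, g_zero hodd]
    · have hτu : τ ∈ Set.Ioo (0:ℝ) u := ⟨h, by linarith⟩
      have h2 := hsub hτu
      have hlt : g τ / τ < -m + ε*m := by exact_mod_cast h2
      have h3 : g τ + m*τ ≤ ε*m*τ := by
        have := (div_lt_iff₀ h).1 hlt
        nlinarith
      rw [gOne_of_nonneg h0]
      exact max_le h3 (mul_nonneg (mul_nonneg hε.le hm.le) h0)
  -- lower bound for G₂
  have hG2 : ∀ t : ℝ, 0 ≤ t → m * t^2/2 ≤ ∫ τ in (0:ℝ)..t, gTwo g m τ := by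
    intro t h0
    have h1 : (∫ τ in (0:ℝ)..t, m*τ) ≤ ∫ τ in (0:ℝ)..t, gTwo g m τ := by
      apply intervalIntegral.integral_mono_on h0
        ((continuous_const.mul continuous_id).intervalIntegrable _ _)
        (hc2.intervalIntegrable _ _)
      exact fun τ hτ => gTwo_ge hτ.1
    have h2 : (∫ τ in (0:ℝ)..t, m*τ) = m * (t^2/2) := by
      rw [intervalIntegral.integral_const_mul, integral_id]
      ring
    rw [h2] at h1; linarith
  -- small-range bound for G₁
  have hG1small : ∀ t : ℝ, 0 ≤ t → t ≤ t₀ →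
      (∫ τ in (0:ℝ)..t, gOne g m τ) ≤ ε * (m * t^2/2) := by
    intro t h0 h1
    have h2 : (∫ τ in (0:ℝ)..t, gOne g m τ) ≤ ∫ τ in (0:ℝ)..t, ε*m*τ := by
      apply intervalIntegral.integral_mono_on h0 (hc1.intervalIntegrable _ _)
        ((continuous_const.mul continuous_id).intervalIntegrable _ _)
      exact fun τ hτ => hsmall τ ⟨hτ.1, le_trans hτ.2 h1⟩
    have h3 : (∫ τ in (0:ℝ)..t, ε*m*τ) = ε*m*(t^2/2) := by
      rw [intervalIntegral.integral_const_mul, integral_id]; ring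
    rw [h3] at h2; linarith
  -- behavior at infinity
  have hevT : ∀ᶠ t : ℝ in atTop, |g t| / |t| ^ (p - 1) < 1 :=
    hg3top.eventually_lt_const one_pos
  obtain ⟨T₁, hT₁⟩ := eventually_atTop.1 hevT
  set T : ℝ := max (max T₁ 1) t₀ with hTdef
  have ht₀T : t₀ ≤ T := le_max_right _ _
  -- compact bound
  obtain ⟨x, hxmem, hx⟩ := isCompact_Icc.exists_isMaxOn
    ⟨t₀, Set.left_mem_Icc.2 ht₀T⟩ (hc1.continuousOn (s := Set.Icc t₀ T))
  set M : ℝ := gOne g m x with hMdef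
  have hM0 : 0 ≤ M := gOne_nonneg (le_trans ht₀.le hxmem.1)
  have ht₀p : (0:ℝ) < t₀ ^ (p-1) := Real.rpow_pos_of_pos ht₀ _
  set K : ℝ := max (1+m) (M / t₀^(p-1)) with hKdef
  have hK : 0 < K := lt_of_lt_of_le (by linarith) (le_max_left _ _)
  have hbig : ∀ τ : ℝ, t₀ ≤ τ → gOne g m τ ≤ K * τ^(p-1) := by
    intro τ hτ
    have hτ0 : 0 < τ := lt_of_lt_of_le ht₀ hτ
    have hτp : t₀^(p-1) ≤ τ^(p-1) := Real.rpow_le_rpow ht₀.le hτ (by linarith)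
    rcases le_or_gt τ T with hcase | hcase
    · have h1 : gOne g m τ ≤ M := hx ⟨hτ, hcase⟩
      have h2 : M ≤ (M / t₀^(p-1)) * τ^(p-1) := by
        rw [div_mul_eq_mul_div, le_div_iff₀ ht₀p]
        nlinarith
      calc gOne g m τ ≤ M := h1
        _ ≤ (M / t₀^(p-1)) * τ^(p-1) := h2
        _ ≤ K * τ^(p-1) := by
            apply mul_le_mul_of_nonneg_right (le_max_right _ _)
            positivity
    · have hτ1 : (1:ℝ) ≤ τ := le_trans (le_trans (le_max_right T₁ 1) (le_max_left _ t₀)) hcase.le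
      have hτT₁ : T₁ ≤ τ := le_trans (le_trans (le_max_left T₁ 1) (le_max_left _ t₀)) hcase.le
      have h1 := hT₁ τ hτT₁
      have habs : |τ| = τ := abs_of_pos hτ0
      rw [habs, div_lt_one (Real.rpow_pos_of_pos hτ0 _)] at h1
      have h2 : τ ≤ τ^(p-1) := by
        nth_rewrite 1 [show τ = τ^(1:ℝ) from (Real.rpow_one τ).symm]
        exact Real.rpow_le_rpow_of_exponent_le hτ1 (by linarith)
      have h3 : gOne g m τ ≤ |g τ| + m*τ := by
        rw [gOne_of_nonneg hτ0.le]
        apply max_le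
        · have := le_abs_self (g τ); linarith
        · positivity
      have hKge : 1 + m ≤ K := le_max_left _ _
      nlinarith [abs_nonneg (g τ), Real.rpow_pos_of_pos hτ0 (p-1)]
  -- final constant
  refine ⟨max (K/p) 1, lt_of_lt_of_le one_pos (le_max_right _ _), ?_⟩
  set C : ℝ := max (K/p) 1 with hCdef
  have hC1 : K/p ≤ C := le_max_left _ _
  have hC0 : 0 < C := lt_of_lt_of_le one_pos (le_max_right _ _)
  have key : ∀ t : ℝ, 0 ≤ t →
      (∫ τ in (0:ℝ)..t, gOne g m τ) ≤ C * |t|^p + ε * ∫ τ in (0:ℝ)..t, gTwo g m τ := by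
    intro t h0
    have habs : |t| = t := abs_of_nonneg h0
    have htp0 : 0 ≤ t ^ p := Real.rpow_nonneg h0 p
    rcases le_or_gt t t₀ with hcase | hcase
    · have h1 := hG1small t h0 hcase
      have h2 := hG2 t h0
      have h3 : 0 ≤ C * |t|^p := by rw [habs]; positivity
      nlinarith
    · -- split the integral at t₀
      have hint1 : (∫ τ in (0:ℝ)..t₀, gOne g m τ) + (∫ τ in t₀..t, gOne g m τ)
          = ∫ τ in (0:ℝ)..t, gOne g m τ :=
        intervalIntegral.integral_add_adjacent_intervals
          (hc1.intervalIntegrable _ _) (hc1.intervalIntegrable _ _)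
      have hmono : (∫ τ in t₀..t, gOne g m τ) ≤ ∫ τ in t₀..t, K * τ^(p-1) := by
        apply intervalIntegral.integral_mono_on hcase.le (hc1.intervalIntegrable _ _)
          ((intervalIntegral.intervalIntegrable_rpow' (by linarith)).const_mul K)
        exact fun τ hτ => hbig τ hτ.1
      have heval : (∫ τ in t₀..t, K * τ^(p-1)) = K * ((t^p - t₀^p)/p) := by
        rw [intervalIntegral.integral_const_mul,
          integral_rpow (Or.inl (by linarith : (-1:ℝ) < p - 1))]
        norm_num
      have ht₀pp : 0 ≤ t₀ ^ p := Real.rpow_nonneg ht₀.le p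
      have h1 := hG1small t₀ ht₀.le le_rfl
      have h2 := hG2 t h0
      have h3 : (∫ τ in t₀..t, gOne g m τ) ≤ (K/p) * t^p := by
        rw [heval] at hmono
        have hp0 : (0:ℝ) < p := by linarith
        have h4 : K * ((t^p - t₀^p)/p) ≤ K/p * t^p := by
          rw [mul_div_assoc', div_mul_eq_mul_div]
          gcongr
          linarith
        linarith
      have h5 : ε * (m * t₀^2/2) ≤ ε * ∫ τ in (0:ℝ)..t, gTwo g m τ := by
        apply mul_le_mul_of_nonneg_left _ hε.le
        have ht2 : t₀^2 ≤ t^2 := by nlinarith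
        have := mul_le_mul_of_nonneg_left ht2 hm.le
        linarith [hG2 t h0]
      have h6 : (K/p)*t^p ≤ C*|t|^p := by
        rw [habs]; exact mul_le_mul_of_nonneg_right hC1 htp0
      linarith
  intro t
  rcases le_or_gt 0 t with h | h
  · exact key t h
  · have e1 : (∫ τ in (0:ℝ)..t, gOne g m τ) = ∫ τ in (0:ℝ)..(-t), gOne g m τ := by
      rw [← int_odd_neg (gOne g m) (gOne_odd hodd) (-t), neg_neg]
    have e2 : (∫ τ in (0:ℝ)..t, gTwo g m τ) = ∫ τ in (0:ℝ)..(-t), gTwo g m τ := by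
      rw [← int_odd_neg (gTwo g m) (gTwo_odd hodd) (-t), neg_neg]
    rw [e1, e2, show |t| = |-t| from (abs_neg t).symm]
    exact key (-t) (by linarith)
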